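/- Let ν be the Haar probability measure on the orthogonal group O(2) of 2×2 real orthogonal matrices. There exists a constant c > 0 such that for all real numbers x₁, x₂, y₁, y₂, ∫_{O(2)} exp(tr(X O Y Oᵀ)) dν(O) = c · e^{(x₁+x₂)(y₁+y₂)/2} · Σ_{k=0}^{∞} (τ/2)^{2k}/(k!)², where X = diag(x₁,x₂), Y = diag(y₁,y₂), and τ = −(x₁−x₂)(y₁−y₂)/2. -/

import Mathlib

open MeasureTheory Matrix Real intervalIntegral

noncomputable instance {n : ℕ} : MeasurableSpace (Matrix (Fin n) (Fin n) ℝ) :=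
  inferInstanceAs (MeasurableSpace (Fin n → Fin n → ℝ))

namespace S17


lemma int_cos_even (k : ℕ) :
    ∫ x in (0:ℝ)..(2*π), cos x ^ (2*k) = 2*π * ((2*k).factorial / (4^k * (k.factorial:ℝ)^2)) := by
  induction k with
  | zero => simp
  | succ k ih =>
    have h : 2 * (k+1) = (2*k) + 2 := by ring
    rw [h, integral_cos_pow, ih]
    have hk : (k.factorial:ℝ) ≠ 0 := Nat.cast_ne_zero.mpr k.factorial_ne_zero
    simp only [Real.sin_two_pi, Real.sin_zero, Nat.factorial_succ, Nat.factorial]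
    push_cast
    field_simp
    ring

lemma int_cos_odd (k : ℕ) :
    ∫ x in (0:ℝ)..(2*π), cos x ^ (2*k+1) = 0 := by
  induction k with
  | zero => simp
  | succ k ih =>
    have h : 2 * (k+1) + 1 = (2*k+1) + 2 := by ring
    rw [h, integral_cos_pow, ih]
    simp

lemma exp_tsum (y : ℝ) : Real.exp y = ∑' n : ℕ, y ^ n / n.factorial := by
  rw [Real.exp_eq_exp_ℝ]
  rw [NormedSpace.exp_eq_tsum_div]

lemma bessel (s : ℝ) :
    ∫ x in (0:ℝ)..(2*π), Real.exp (s * cos x)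
      = 2*π * ∑' k : ℕ, (s/2) ^ (2*k) / (k.factorial:ℝ)^2 := by
  have hle : (0:ℝ) ≤ 2*π := by positivity
  have h1 : ∀ x : ℝ, Real.exp (s * cos x) = ∑' n : ℕ, s ^ n * cos x ^ n / n.factorial := by
    intro x; rw [exp_tsum (s * cos x)]
    congr 1; funext n; rw [mul_pow]
  have hInt : ∀ n : ℕ, IntegrableOn (fun x => s ^ n * cos x ^ n / (n.factorial:ℝ))
      (Set.Ioc (0:ℝ) (2*π)) volume := by
    intro n
    exact (((continuous_const.mul ((Real.continuous_cos).pow n)).div_const _)).integrableOn_Ioc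
  have hSum : Summable fun n : ℕ =>
      ∫ x in Set.Ioc (0:ℝ) (2*π), ‖s ^ n * cos x ^ n / (n.factorial:ℝ)‖ := by
    apply Summable.of_nonneg_of_le
      (fun n => integral_nonneg fun x => norm_nonneg _)
      (fun n => ?_) (((Real.summable_pow_div_factorial |s|).mul_left (2*π)))
    calc ∫ x in Set.Ioc (0:ℝ) (2*π), ‖s ^ n * cos x ^ n / (n.factorial:ℝ)‖
        ≤ ∫ _x in Set.Ioc (0:ℝ) (2*π), |s| ^ n / (n.factorial:ℝ) := by
          apply integral_mono_of_nonneg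
          · exact Filter.Eventually.of_forall fun x => norm_nonneg _
          · exact (integrableOn_const_iff).mpr (Or.inr (by simp [Real.volume_Ioc, ENNReal.mul_lt_top]))
          · refine Filter.Eventually.of_forall fun x => ?_
            have he : ‖s ^ n * cos x ^ n / (n.factorial:ℝ)‖
                = |s| ^ n * |cos x| ^ n / (n.factorial:ℝ) := by
              rw [norm_div, norm_mul, norm_pow, norm_pow, Real.norm_natCast,
                Real.norm_eq_abs, Real.norm_eq_abs]
            simp only [he]
            have h3 : (0:ℝ) < n.factorial := by positivity
            apply div_le_div_of_nonneg_right ?_ h3.le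
            have h2 : |cos x| ^ n ≤ 1 :=
              pow_le_one₀ (abs_nonneg _) (Real.abs_cos_le_one x)
            calc |s| ^ n * |cos x| ^ n ≤ |s| ^ n * 1 :=
                  mul_le_mul_of_nonneg_left h2 (by positivity)
              _ = |s| ^ n := mul_one _
      _ = 2*π * (|s| ^ n / (n.factorial:ℝ)) := by
          rw [MeasureTheory.setIntegral_const]
          simp [Real.volume_Ioc, ENNReal.toReal_ofReal hle, Real.pi_pos.le]
  rw [integral_of_le hle]
  simp_rw [h1]
  rw [← MeasureTheory.integral_tsum_of_summable_integral_norm hInt hSum]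
  have h4 : ∀ n : ℕ, (∫ x in Set.Ioc (0:ℝ) (2*π), s ^ n * cos x ^ n / (n.factorial:ℝ))
      = s ^ n / n.factorial * ∫ x in (0:ℝ)..(2*π), cos x ^ n := by
    intro n
    rw [← integral_of_le hle, ← intervalIntegral.integral_const_mul]
    congr 1; funext x; ring
  simp_rw [h4]
  have hinj : Function.Injective (fun k : ℕ => 2*k) := mul_right_injective₀ two_ne_zero
  have hsupp : Function.support
      (fun n : ℕ => s ^ n / n.factorial * ∫ x in (0:ℝ)..(2*π), cos x ^ n)
      ⊆ Set.range (fun k : ℕ => 2*k) := by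
    intro n hn
    rcases Nat.even_or_odd n with ⟨k, rfl⟩ | ⟨k, rfl⟩
    · exact ⟨k, two_mul k⟩
    · exfalso
      apply hn
      simp [int_cos_odd k]
  rw [← Function.Injective.tsum_eq hinj hsupp, ← tsum_mul_left]
  congr 1; funext k
  beta_reduce
  rw [int_cos_even k]
  have h6 : ((2*k).factorial:ℝ) ≠ 0 := Nat.cast_ne_zero.mpr (2*k).factorial_ne_zero
  have h7 : (k.factorial:ℝ) ≠ 0 := Nat.cast_ne_zero.mpr k.factorial_ne_zero
  have h8 : (s/2) ^ (2*k) = s ^ (2*k) / 4 ^ k := by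
    rw [div_pow, pow_mul, pow_mul]; norm_num
  rw [h8]
  field_simp

end S17

namespace S17

open Function

lemma periodic_exp_cossq (t : ℝ) : Function.Periodic (fun u => Real.exp (t * cos u ^ 2)) (2*π) :=
  fun x => by simp [Real.cos_periodic x]

lemma periodic_exp_cos (s : ℝ) : Function.Periodic (fun u => Real.exp (s * cos u)) (2*π) :=
  fun x => by simp [Real.cos_periodic x]

lemma cossq_int (t : ℝ) :
    ∫ x in (0:ℝ)..(2*π), Real.exp (t * cos x ^ 2)
      = 2*π * Real.exp (t/2) * ∑' k : ℕ, (t/4) ^ (2*k) / (k.factorial:ℝ)^2 := by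
  have h1 : ∀ x : ℝ, Real.exp (t * cos x ^ 2)
      = Real.exp (t/2) * Real.exp ((t/2) * cos (2*x)) := by
    intro x
    rw [← Real.exp_add, Real.cos_sq x]
    congr 1; ring
  simp_rw [h1]
  rw [intervalIntegral.integral_const_mul]
  have h2 : (∫ x in (0:ℝ)..(2*π), Real.exp ((t/2) * cos (2*x)))
      = 2⁻¹ * ∫ x in (0:ℝ)..(4*π), Real.exp ((t/2) * cos x) := by
    have := intervalIntegral.integral_comp_mul_left
      (a := (0:ℝ)) (b := 2*π) (fun x => Real.exp ((t/2) * cos x)) (c := 2) two_ne_zero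
    rw [this]
    norm_num
    rw [show (2:ℝ) * (2*π) = 4*π by ring]
  rw [h2]
  have h3 : (∫ x in (0:ℝ)..(4*π), Real.exp ((t/2) * cos x))
      = 2 * ∫ x in (0:ℝ)..(2*π), Real.exp ((t/2) * cos x) := by
    have hsplit : (∫ x in (0:ℝ)..(4*π), Real.exp ((t/2) * cos x))
        = (∫ x in (0:ℝ)..(2*π), Real.exp ((t/2) * cos x))
          + ∫ x in (2*π)..(4*π), Real.exp ((t/2) * cos x) := by
      rw [intervalIntegral.integral_add_adjacent_intervals] <;>
        exact (Real.continuous_exp.comp (continuous_const.mul Real.continuous_cos)).intervalIntegrable _ _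
    have hper : (∫ x in (2*π)..(4*π), Real.exp ((t/2) * cos x))
        = ∫ x in (0:ℝ)..(2*π), Real.exp ((t/2) * cos x) := by
      have := (periodic_exp_cos (t/2)).intervalIntegral_add_eq (2*π) 0
      rw [show (2*π) + 2*π = 4*π by ring, zero_add] at this
      exact this
    rw [hsplit, hper]; ring
  rw [h3, bessel (t/2)]
  have : (t/2)/2 = t/4 := by ring
  rw [this]
  ring

lemma shift_int (t a c : ℝ) (h : a^2 + c^2 = 1) :
    ∫ θ in (0:ℝ)..(2*π), Real.exp (t * (cos θ * a - sin θ * c)^2)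
      = ∫ θ in (0:ℝ)..(2*π), Real.exp (t * cos θ ^ 2) := by
  obtain ⟨φ, hcos, hsin⟩ : ∃ φ : ℝ, Real.cos φ = a ∧ Real.sin φ = c := by
    have hz : ‖(⟨a, c⟩ : ℂ)‖ = 1 := by
      rw [Complex.norm_def, Complex.normSq_mk]
      rw [show a*a + c*c = 1 by nlinarith]
      exact Real.sqrt_one
    have hz0 : (⟨a, c⟩ : ℂ) ≠ 0 := by
      intro h0; rw [h0] at hz; simp at hz
    refine ⟨Complex.arg ⟨a, c⟩, ?_, ?_⟩
    · rw [Complex.cos_arg hz0, hz]; simp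
    · rw [Complex.sin_arg, hz]; simp
  have h4 : ∀ θ : ℝ, cos θ * a - sin θ * c = cos (θ + φ) := by
    intro θ; rw [Real.cos_add, hcos, hsin]
  simp_rw [h4]
  have h5 := intervalIntegral.integral_comp_add_right (a := (0:ℝ)) (b := 2*π)
    (fun θ => Real.exp (t * cos θ ^ 2)) φ
  rw [zero_add] at h5
  rw [h5]
  have h6 := (periodic_exp_cossq t).intervalIntegral_add_eq φ 0
  rw [zero_add, add_comm φ (2*π)] at h6
  exact h6

end S17

namespace S17

abbrev G := Matrix.orthogonalGroup (Fin 2) ℝ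

lemma measurable_entry (i j : Fin 2) :
    Measurable (fun O : G => (O : Matrix (Fin 2) (Fin 2) ℝ) i j) := by
  have h1 : Measurable (fun M : Matrix (Fin 2) (Fin 2) ℝ => M i j) :=
    (measurable_pi_apply j).comp (measurable_pi_apply i)
  exact h1.comp measurable_subtype_coe

instance : MeasurableMul G := by
  constructor
  · intro c
    apply Measurable.subtype_mk
    show Measurable fun x : G => (c : Matrix (Fin 2) (Fin 2) ℝ) * (x : Matrix (Fin 2) (Fin 2) ℝ)
    apply measurable_pi_lambda
    intro i
    apply measurable_pi_lambda
    intro j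
    show Measurable fun x : G =>
      ((c : Matrix (Fin 2) (Fin 2) ℝ) * (x : Matrix (Fin 2) (Fin 2) ℝ)) i j
    simp_rw [Matrix.mul_apply, Fin.sum_univ_two]
    exact ((measurable_entry 0 j).const_mul _).add ((measurable_entry 1 j).const_mul _)
  · intro c
    apply Measurable.subtype_mk
    show Measurable fun x : G => (x : Matrix (Fin 2) (Fin 2) ℝ) * (c : Matrix (Fin 2) (Fin 2) ℝ)
    apply measurable_pi_lambda
    intro i
    apply measurable_pi_lambda
    intro j
    show Measurable fun x : G =>
      ((x : Matrix (Fin 2) (Fin 2) ℝ) * (c : Matrix (Fin 2) (Fin 2) ℝ)) i j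
    simp_rw [Matrix.mul_apply, Fin.sum_univ_two]
    exact ((measurable_entry i 0).mul_const _).add ((measurable_entry i 1).mul_const _)

noncomputable def rot (θ : ℝ) : G :=
  ⟨!![cos θ, -sin θ; sin θ, cos θ], by
    rw [Matrix.mem_orthogonalGroup_iff]
    ext i j
    fin_cases i <;> fin_cases j <;>
      simp [Matrix.mul_apply, Fin.sum_univ_two, Matrix.one_apply,
        Matrix.star_eq_conjTranspose, Matrix.conjTranspose_apply,
        Matrix.vecHead, Matrix.vecTail] <;>
      nlinarith [Real.sin_sq_add_cos_sq θ]⟩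

lemma coe_rot_mul (θ : ℝ) (O : G) :
    ((rot θ * O : G) : Matrix (Fin 2) (Fin 2) ℝ)
      = (!![cos θ, -sin θ; sin θ, cos θ]) * (O : Matrix (Fin 2) (Fin 2) ℝ) := rfl

lemma rot_mul_entry (θ : ℝ) (O : G) :
    ((rot θ * O : G) : Matrix (Fin 2) (Fin 2) ℝ) 0 0
      = cos θ * (O : Matrix (Fin 2) (Fin 2) ℝ) 0 0
        - sin θ * (O : Matrix (Fin 2) (Fin 2) ℝ) 1 0 := by
  rw [coe_rot_mul]
  simp [Matrix.mul_apply, Fin.sum_univ_two]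
  ring

-- orthogonality entry relations
lemma ortho_rel (O : G) :
    (O : Matrix (Fin 2) (Fin 2) ℝ) 0 0 ^ 2 + (O : Matrix (Fin 2) (Fin 2) ℝ) 0 1 ^ 2 = 1 ∧
    (O : Matrix (Fin 2) (Fin 2) ℝ) 0 0 ^ 2 + (O : Matrix (Fin 2) (Fin 2) ℝ) 1 0 ^ 2 = 1 ∧
    (O : Matrix (Fin 2) (Fin 2) ℝ) 0 1 ^ 2 + (O : Matrix (Fin 2) (Fin 2) ℝ) 1 1 ^ 2 = 1 := by
  have h1 := Matrix.mem_orthogonalGroup_iff (Fin 2) ℝ |>.mp O.2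
  have h2 := Matrix.mem_orthogonalGroup_iff' (Fin 2) ℝ |>.mp O.2
  refine ⟨?_, ?_, ?_⟩
  · have := congrFun (congrFun h1 0) 0
    simp [Matrix.mul_apply, Fin.sum_univ_two, Matrix.one_apply,
      Matrix.star_eq_conjTranspose, Matrix.conjTranspose_apply] at this
    nlinarith [this]
  · have := congrFun (congrFun h2 0) 0
    simp [Matrix.mul_apply, Fin.sum_univ_two, Matrix.one_apply,
      Matrix.star_eq_conjTranspose, Matrix.conjTranspose_apply] at this
    nlinarith [this]
  · have := congrFun (congrFun h2 1) 1
    simp [Matrix.mul_apply, Fin.sum_univ_two, Matrix.one_apply,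
      Matrix.star_eq_conjTranspose, Matrix.conjTranspose_apply] at this
    nlinarith [this]

lemma trace_eq (x₁ x₂ y₁ y₂ : ℝ) (O : G) :
    Matrix.trace (Matrix.diagonal ![x₁, x₂] * (O : Matrix (Fin 2) (Fin 2) ℝ) *
        Matrix.diagonal ![y₁, y₂] * (O : Matrix (Fin 2) (Fin 2) ℝ)ᵀ)
      = x₁ * y₂ + x₂ * y₁
        + (x₁ - x₂) * (y₁ - y₂) * ((O : Matrix (Fin 2) (Fin 2) ℝ) 0 0) ^ 2 := by
  obtain ⟨h1, h2, h3⟩ := ortho_rel O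
  rw [Matrix.trace_fin_two]
  simp [Matrix.mul_apply, Fin.sum_univ_two, Matrix.diagonal, Matrix.transpose_apply]
  linear_combination (x₁*y₂)*h1 + (x₂*y₁)*h2 + (x₂*y₂)*h3 - (x₂*y₂)*h1

end S17

namespace S17
open Real

lemma sq_le_one_entry (O : G) : ((O : Matrix (Fin 2) (Fin 2) ℝ) 0 0) ^ 2 ≤ 1 := by
  have h := (ortho_rel O).2.1
  nlinarith [sq_nonneg ((O : Matrix (Fin 2) (Fin 2) ℝ) 1 0)]

lemma key (ν : Measure G) [ν.IsHaarMeasure] [IsProbabilityMeasure ν] (t : ℝ) :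
    ∫ O : G, Real.exp (t * ((O : Matrix (Fin 2) (Fin 2) ℝ) 0 0) ^ 2) ∂ν
      = Real.exp (t/2) * ∑' k : ℕ, (t/4) ^ (2*k) / (k.factorial:ℝ)^2 := by
  have hπ : (0:ℝ) < 2*π := by positivity
  set μI : Measure ℝ := volume.restrict (Set.Ioc (0:ℝ) (2*π)) with hμI
  haveI : IsFiniteMeasure μI := by
    constructor
    rw [hμI, Measure.restrict_apply MeasurableSet.univ, Set.univ_inter, Real.volume_Ioc]
    exact ENNReal.ofReal_lt_top
  -- the function on the product
  have hF_meas : Measurable (fun p : ℝ × G =>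
      Real.exp (t * (cos p.1 * ((p.2 : Matrix (Fin 2) (Fin 2) ℝ) 0 0)
        - sin p.1 * ((p.2 : Matrix (Fin 2) (Fin 2) ℝ) 1 0)) ^ 2)) := by
    apply Real.measurable_exp.comp
    apply Measurable.const_mul
    apply Measurable.pow_const
    exact ((Real.measurable_cos.comp measurable_fst).mul
      ((measurable_entry 0 0).comp measurable_snd)).sub
      ((Real.measurable_sin.comp measurable_fst).mul
      ((measurable_entry 1 0).comp measurable_snd))
  have hbound : ∀ p : ℝ × G,
      ‖Real.exp (t * (cos p.1 * ((p.2 : Matrix (Fin 2) (Fin 2) ℝ) 0 0)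
        - sin p.1 * ((p.2 : Matrix (Fin 2) (Fin 2) ℝ) 1 0)) ^ 2)‖ ≤ Real.exp (4 * |t|) := by
    rintro ⟨θ, O⟩
    rw [Real.norm_eq_abs, Real.abs_exp]
    apply Real.exp_le_exp.mpr
    have h1 : ((O : Matrix (Fin 2) (Fin 2) ℝ) 0 0) ^ 2 ≤ 1 := sq_le_one_entry O
    have h2 : ((O : Matrix (Fin 2) (Fin 2) ℝ) 1 0) ^ 2 ≤ 1 := by
      have h := (ortho_rel O).2.1; nlinarith [sq_nonneg ((O : Matrix (Fin 2) (Fin 2) ℝ) 0 0)]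
    have hc : cos θ ^ 2 ≤ 1 := by nlinarith [sin_sq_add_cos_sq θ, sq_nonneg (sin θ)]
    have hs : sin θ ^ 2 ≤ 1 := by nlinarith [sin_sq_add_cos_sq θ, sq_nonneg (cos θ)]
    have hv : (cos θ * ((O : Matrix (Fin 2) (Fin 2) ℝ) 0 0)
        - sin θ * ((O : Matrix (Fin 2) (Fin 2) ℝ) 1 0)) ^ 2 ≤ 4 := by
      nlinarith [sq_nonneg (cos θ * ((O : Matrix (Fin 2) (Fin 2) ℝ) 0 0)
        + sin θ * ((O : Matrix (Fin 2) (Fin 2) ℝ) 1 0)),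
        sq_nonneg ((O : Matrix (Fin 2) (Fin 2) ℝ) 0 0),
        sq_nonneg ((O : Matrix (Fin 2) (Fin 2) ℝ) 1 0), sq_nonneg (cos θ), sq_nonneg (sin θ)]
    have hv0 : (0:ℝ) ≤ (cos θ * ((O : Matrix (Fin 2) (Fin 2) ℝ) 0 0)
        - sin θ * ((O : Matrix (Fin 2) (Fin 2) ℝ) 1 0)) ^ 2 := sq_nonneg _
    calc t * _ ≤ |t| * _ := mul_le_mul_of_nonneg_right (le_abs_self t) hv0
      _ ≤ |t| * 4 := mul_le_mul_of_nonneg_left hv (abs_nonneg t)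
      _ = 4 * |t| := mul_comm _ _
  have hF_int : Integrable (fun p : ℝ × G =>
      Real.exp (t * (cos p.1 * ((p.2 : Matrix (Fin 2) (Fin 2) ℝ) 0 0)
        - sin p.1 * ((p.2 : Matrix (Fin 2) (Fin 2) ℝ) 1 0)) ^ 2)) (μI.prod ν) :=
    Integrable.mono' (integrable_const _) hF_meas.aestronglyMeasurable
      (Filter.Eventually.of_forall hbound)
  have h_left : ∀ θ : ℝ,
      (∫ O : G, Real.exp (t * (cos θ * ((O : Matrix (Fin 2) (Fin 2) ℝ) 0 0)
        - sin θ * ((O : Matrix (Fin 2) (Fin 2) ℝ) 1 0)) ^ 2) ∂ν)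
      = ∫ O : G, Real.exp (t * ((O : Matrix (Fin 2) (Fin 2) ℝ) 0 0) ^ 2) ∂ν := by
    intro θ
    have := MeasureTheory.integral_mul_left_eq_self (μ := ν)
      (fun O : G => Real.exp (t * ((O : Matrix (Fin 2) (Fin 2) ℝ) 0 0) ^ 2)) (rot θ)
    rw [← this]
    congr 1
    funext O
    rw [rot_mul_entry]
  have h_inner : ∀ O : G,
      (∫ θ : ℝ, Real.exp (t * (cos θ * ((O : Matrix (Fin 2) (Fin 2) ℝ) 0 0)
        - sin θ * ((O : Matrix (Fin 2) (Fin 2) ℝ) 1 0)) ^ 2) ∂μI)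
      = ∫ θ in (0:ℝ)..(2*π), Real.exp (t * cos θ ^ 2) := by
    intro O
    rw [hμI, ← intervalIntegral.integral_of_le hπ.le]
    exact shift_int t _ _ (ortho_rel O).2.1
  have swap := MeasureTheory.integral_integral_swap (μ := μI) (ν := ν)
    (f := fun θ (O : G) => Real.exp (t * (cos θ * ((O : Matrix (Fin 2) (Fin 2) ℝ) 0 0)
        - sin θ * ((O : Matrix (Fin 2) (Fin 2) ℝ) 1 0)) ^ 2)) hF_int
  simp_rw [h_left, h_inner] at swap
  have hμIuniv : μI Set.univ = ENNReal.ofReal (2*π) := by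
    rw [hμI, Measure.restrict_apply MeasurableSet.univ, Set.univ_inter, Real.volume_Ioc]
    norm_num
  rw [MeasureTheory.integral_const, MeasureTheory.integral_const, measureReal_def, measureReal_def, hμIuniv,
    measure_univ] at swap
  simp only [ENNReal.toReal_ofReal hπ.le, ENNReal.toReal_one, one_smul, smul_eq_mul, one_mul] at swap
  rw [cossq_int t] at swap
  have h' : 2 * π * (∫ (O : G), rexp (t * ((O : Matrix (Fin 2) (Fin 2) ℝ) 0 0) ^ 2) ∂ν)
      = 2 * π * (rexp (t / 2) * ∑' (k : ℕ), (t / 4) ^ (2 * k) / (k.factorial:ℝ) ^ 2) := by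
    linear_combination swap
  exact mul_left_cancel₀ (ne_of_gt hπ) h'

end S17


open S17 in
/-- the `n = 2` angular integral for `β = 1/2`: for the Haar probability
measure `ν` on `O(2)`, there is a constant `c > 0` such that for all real `x₁, x₂, y₁, y₂`,
`∫ e^{tr(X O Y Oᵀ)} dν = c e^{(x₁+x₂)(y₁+y₂)/2} Σ_{k≥0} (τ/2)^{2k}/(k!)²` with
`τ = −(x₁−x₂)(y₁−y₂)/2`. -/
theorem statement17 (ν : Measure (Matrix.orthogonalGroup (Fin 2) ℝ))
    [ν.IsHaarMeasure] [IsProbabilityMeasure ν] :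
    ∃ c : ℝ, 0 < c ∧ ∀ x₁ x₂ y₁ y₂ : ℝ,
      (∫ O : Matrix.orthogonalGroup (Fin 2) ℝ,
        Real.exp (Matrix.trace (Matrix.diagonal ![x₁, x₂] *
          (O : Matrix (Fin 2) (Fin 2) ℝ) * Matrix.diagonal ![y₁, y₂] *
          (O : Matrix (Fin 2) (Fin 2) ℝ)ᵀ)) ∂ν) =
      c * Real.exp ((x₁ + x₂) * (y₁ + y₂) / 2) *
        ∑' k : ℕ, (-(x₁ - x₂) * (y₁ - y₂) / 2 / 2) ^ (2 * k) / (Nat.factorial k : ℝ) ^ 2 := by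
  refine ⟨1, one_pos, fun x₁ x₂ y₁ y₂ => ?_⟩
  set t : ℝ := (x₁ - x₂) * (y₁ - y₂) with ht
  have h1 : ∀ O : Matrix.orthogonalGroup (Fin 2) ℝ,
      Real.exp (Matrix.trace (Matrix.diagonal ![x₁, x₂] *
          (O : Matrix (Fin 2) (Fin 2) ℝ) * Matrix.diagonal ![y₁, y₂] *
          (O : Matrix (Fin 2) (Fin 2) ℝ)ᵀ))
        = Real.exp (x₁ * y₂ + x₂ * y₁)
          * Real.exp (t * ((O : Matrix (Fin 2) (Fin 2) ℝ) 0 0) ^ 2) := by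
    intro O
    rw [trace_eq, Real.exp_add]
  simp_rw [h1]
  rw [MeasureTheory.integral_const_mul, key ν t]
  have h2 : ∀ k : ℕ, (-(x₁ - x₂) * (y₁ - y₂) / 2 / 2) ^ (2 * k) = (t/4) ^ (2*k) := by
    intro k
    have : (-(x₁ - x₂) * (y₁ - y₂) / 2 / 2) = -(t/4) := by rw [ht]; ring
    rw [this, Even.neg_pow (even_two_mul k)]
  simp_rw [h2]
  rw [← mul_assoc, ← Real.exp_add, one_mul]
  congr 2
  ring
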